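/- For every s with 1/√3 < s < 1/tan(3π/20), one has s²(19 - s²) - (1+s²)³·arctan²(1/s) > 0. -/

import Mathlib

set_option maxHeartbeats 1000000 in
theorem stmt_16 (s : ℝ) (h1 : 1 / Real.sqrt 3 < s)
    (h2 : s < 1 / Real.tan (3 * Real.pi / 20)) :
    0 < s ^ 2 * (19 - s ^ 2) - (1 + s ^ 2) ^ 3 * (Real.arctan (1 / s)) ^ 2 := by
  have h3 : (0:ℝ) < Real.sqrt 3 := by positivity
  have hs0 : 0 < s := lt_trans (by positivity) h1
  have hπl : 3.141592 < Real.pi := Real.pi_gt_d6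
  have hπu : Real.pi < 3.15 := Real.pi_lt_d2
  set x := 3 * Real.pi / 20 with hx
  have hx0 : 0 < x := by rw [hx]; positivity
  have hx1 : x ≤ 1 := by rw [hx]; nlinarith
  have hxlt : x < Real.pi / 2 := by rw [hx]; nlinarith
  have hsin := Real.sin_gt_sub_cube hx0
  have hcos : Real.cos x ≤ 1 := Real.cos_le_one x
  have hcospos : 0 < Real.cos x := Real.cos_pos_of_mem_Ioo ⟨by linarith, hxlt⟩
  have hxb1 : 0.471 < x := by rw [hx]; nlinarith
  have hxb2 : x < 0.4725 := by rw [hx]; nlinarith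
  have htan : (2:ℝ)/5 < Real.tan x := by
    rw [Real.tan_eq_sin_div_cos, lt_div_iff₀ hcospos]
    have hxsq : x^2 < (189/400 : ℝ)^2 := by nlinarith
    have hcube : x^3 < 0.106 := by nlinarith [hxsq, hxb2, hx0]
    nlinarith [hsin, hcos, hxb1, hcube]
  have hs52 : s < 5/2 := by
    have h1t : 1 / Real.tan x ≤ 1 / (2/5 : ℝ) :=
      one_div_le_one_div_of_le (by norm_num) htan.le
    have : (1 : ℝ) / (2/5 : ℝ) = 5/2 := by norm_num
    linarith [h2, h1t]
  have hs2 : 1/3 < s^2 := by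
    have hp : (1 / Real.sqrt 3)^2 < s^2 :=
      pow_lt_pow_left₀ h1 (by positivity) two_ne_zero
    have : (1 / Real.sqrt 3)^2 = 1/3 := by
      rw [div_pow, Real.sq_sqrt (by norm_num : (3:ℝ) ≥ 0)]; norm_num
    linarith [hp, this.symm.le]
  have ha_pos : 0 < Real.arctan (1/s) := by
    have := Real.arctan_strictMono (show (0:ℝ) < 1/s by positivity)
    rwa [Real.arctan_zero] at this
  rcases le_total s 1 with hle | hge
  · -- use arctan (1/s) < π/3
    have h13 : 1/s < Real.sqrt 3 := by
      rw [div_lt_iff₀ hs0]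
      have := (div_lt_iff₀ h3).mp h1
      linarith [this]
    have htan3 : Real.tan (Real.pi/3) = Real.sqrt 3 := by
      rw [Real.tan_eq_sin_div_cos, Real.sin_pi_div_three, Real.cos_pi_div_three]
      field_simp
    have hub : Real.arctan (1/s) < Real.pi/3 := by
      have := Real.arctan_strictMono h13
      rwa [← htan3, Real.arctan_tan (by linarith [Real.pi_pos]) (by linarith [Real.pi_pos])] at this
    have ha105 : Real.arctan (1/s) < 21/20 := by linarith
    have hsq : (Real.arctan (1/s))^2 < (441/400 : ℝ) := by nlinarith [ha_pos, ha105]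
    have hs2u : s^2 ≤ 1 := by nlinarith
    have hstep : (1 + s^2)^3 * (Real.arctan (1/s))^2 ≤ (1 + s^2)^3 * (441/400 : ℝ) :=
      mul_le_mul_of_nonneg_left hsq.le (by positivity)
    have hprod : 0 ≤ (s^2 - 1/3) * (1 - s^2) := mul_nonneg (by linarith) (by linarith)
    clear h2 htan hsin hcos hcospos hxb1 hxb2 hx0 hx1 hxlt hx h1 h13 htan3 hub ha105
    nlinarith [hstep, hs2, hs2u, hprod, sq_nonneg (s^2 - 1/3), sq_nonneg (1 - s^2),
      mul_nonneg hprod (by linarith : (0:ℝ) ≤ 1 - s^2)]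
  · -- use arctan (1/s) < 1/s
    have hub : Real.arctan (1/s) < 1/s := by
      have := Real.lt_tan ha_pos (Real.arctan_lt_pi_div_two (1/s))
      rwa [Real.tan_arctan] at this
    have ha2 : (Real.arctan (1/s))^2 < 1/s^2 := by
      have h1 : (Real.arctan (1/s))^2 < (1/s)^2 := pow_lt_pow_left₀ hub ha_pos.le two_ne_zero
      rwa [div_pow, one_pow] at h1
    have hs2u : s^2 < 25/4 := by nlinarith
    have hs2l : 1 ≤ s^2 := by nlinarith
    have hprod : 0 ≤ (s^2 - 1) * (25/4 - s^2) := mul_nonneg (by linarith) (by linarith)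
    have key : (1 + s^2)^3 * (1/s^2) < s^2 * (19 - s^2) := by
      rw [mul_one_div, div_lt_iff₀ (by positivity : (0:ℝ) < s^2)]
      clear h2 htan hsin hcos hcospos hxb1 hxb2 hx0 hx1 hxlt hx h1 hub ha2
      nlinarith [hs2u, hs2l, hprod, mul_nonneg hprod (by linarith : (0:ℝ) ≤ s^2 - 1),
        mul_nonneg hprod (by linarith : (0:ℝ) ≤ 25/4 - s^2)]
    have hmul : (1 + s^2)^3 * (Real.arctan (1/s))^2 < (1 + s^2)^3 * (1/s^2) :=
      mul_lt_mul_of_pos_left ha2 (by positivity)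
    linarith
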